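/- Let n ≥ 3 and p ≥ 1, and let T be a tree with the following structure: a spine path v₁,…,vₙ with d(v₁) = d(vₙ) = p+1 and d(vᵢ) = p+2 for 2 ≤ i ≤ n−1; each spine vertex is adjacent to exactly p first-level pendant vertices, each of degree 2p; each first-level pendant vertex is adjacent to exactly 2p − 1 second-level pendant vertices, each of degree 2p²; each second-level pendant vertex is adjacent to exactly 2p² − 1 leaves of degree 1; and T has no other vertices or edges. Then σ(T) = n·p·(2p−1)·(2p²−1)³ + n·p·(2p−1)·(2p − 2p²)² + 2p·(1−p)² + p(n−2)·(2−p)² + 2. -/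

import Mathlib

open Finset

variable {V : Type*}

noncomputable def sigmaIndex [Fintype V] (G : SimpleGraph V) : ℤ := by
  classical
  exact ∑ e ∈ G.edgeFinset,
    Sym2.lift ⟨fun u v => ((G.degree u : ℤ) - (G.degree v : ℤ)) ^ 2, fun u v => by ring⟩ e

noncomputable def deg [Fintype V] (G : SimpleGraph V) (v : V) : ℕ := by
  classical
  exact G.degree v

noncomputable def nbrCount [Fintype V] (G : SimpleGraph V) (v : V) (P : V → Prop) : ℕ := by
  classical
  exact ((G.neighborFinset v).filter P).card

def IsCaterpillar [Fintype V] (G : SimpleGraph V) : Prop :=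
  ∃ (u w : V) (P : G.Walk u w), P.IsPath ∧
    ∀ x : V, x ∈ P.support ∨ ∃ y ∈ P.support, G.Adj x y

lemma sigmaIndex_def' [Fintype V] (G : SimpleGraph V) [Fintype G.edgeSet] [DecidableRel G.Adj] :
    sigmaIndex G = ∑ e ∈ G.edgeFinset,
      Sym2.lift ⟨fun u v => ((deg G u : ℤ) - (deg G v : ℤ)) ^ 2, fun u v => by ring⟩ e := by
  unfold sigmaIndex deg
  congr!

lemma deg_def' [Fintype V] (G : SimpleGraph V) [DecidableRel G.Adj] (w : V) :
    deg G w = G.degree w := by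
  unfold deg; congr!

lemma nbrCount_def' [Fintype V] (G : SimpleGraph V) [DecidableRel G.Adj] (w : V) (P : V → Prop)
    [DecidablePred P] : nbrCount G w P = ((G.neighborFinset w).filter P).card := by
  unfold nbrCount; congr!

lemma two_mul_sigma [Fintype V] (G : SimpleGraph V) [DecidableRel G.Adj] [DecidableEq V] :
    2 * sigmaIndex G = ∑ w : V, ∑ x : V,
      (if G.Adj w x then ((deg G w : ℤ) - (deg G x : ℤ)) ^ 2 else 0) := by
  classical
  set f : Sym2 V → ℤ :=
    Sym2.lift ⟨fun u v => ((deg G u : ℤ) - (deg G v : ℤ)) ^ 2, fun u v => by ring⟩ with hf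
  have key : ∑ p ∈ (univ ×ˢ univ).filter (fun p : V × V => G.Adj p.1 p.2), f (Sym2.mk p.1 p.2)
      = ∑ e ∈ G.edgeFinset, 2 * f e := by
    rw [← Finset.sum_fiberwise_of_maps_to (g := fun p : V × V => Sym2.mk p.1 p.2)
      (t := G.edgeFinset) ?_ (fun p => f (Sym2.mk p.1 p.2))]
    · refine Finset.sum_congr rfl ?_
      intro e he
      induction e with
      | _ u w =>
        have huw : G.Adj u w := by
          rw [SimpleGraph.mem_edgeFinset, SimpleGraph.mem_edgeSet] at he; exact he
        have hset : ((univ ×ˢ univ).filter (fun p : V × V => G.Adj p.1 p.2)).filter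
            (fun p => Sym2.mk p.1 p.2 = s(u, w)) = {(u, w), (w, u)} := by
          ext ⟨a, b⟩
          simp only [Finset.mem_filter, Finset.mem_product, Finset.mem_univ, true_and,
            Finset.mem_insert, Finset.mem_singleton, Prod.mk.injEq, Sym2.eq, Sym2.rel_iff',
            Prod.swap_prod_mk]
          constructor
          · rintro ⟨_, h | h⟩
            · exact Or.inl h
            · exact Or.inr h
          · rintro (⟨rfl, rfl⟩ | ⟨rfl, rfl⟩)
            · exact ⟨huw, Or.inl ⟨rfl, rfl⟩⟩
            · exact ⟨huw.symm, Or.inr ⟨rfl, rfl⟩⟩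
        rw [hset]
        rw [Finset.sum_insert (by simp [huw.ne]), Finset.sum_singleton]
        have h2 : Sym2.mk w u = s(u, w) := Sym2.eq_swap
        rw [h2]
        ring
    · intro p hp
      simp only [Finset.mem_filter, Finset.mem_product] at hp
      rw [SimpleGraph.mem_edgeFinset, SimpleGraph.mem_edgeSet]
      exact hp.2
  have h3 : ∑ e ∈ G.edgeFinset, 2 * f e = 2 * sigmaIndex G := by
    rw [sigmaIndex_def' G, Finset.mul_sum]
  rw [← h3, ← key, Finset.sum_filter, Finset.sum_product]
  simp [hf]

lemma sum_fin_ite {n a : ℕ} (ha : a < n) (c : ℤ) :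
    ∑ i : Fin n, (if (i : ℕ) = a then c else 0) = c := by
  rw [Finset.sum_eq_single (⟨a, ha⟩ : Fin n)]
  · simp
  · intro i _ hne
    rw [if_neg]
    intro h
    exact hne (Fin.ext h)
  · simp

lemma sum_fin_ite2 {n : ℕ} {a b : ℕ} (ha : a < n) (hb : b < n) :
    ∑ i : Fin n, ∑ j : Fin n, (if (i : ℕ) = a ∧ (j : ℕ) = b then (1 : ℤ) else 0) = 1 := by
  have : ∀ i : Fin n, ∑ j : Fin n, (if (i : ℕ) = a ∧ (j : ℕ) = b then (1 : ℤ) else 0)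
      = (if (i : ℕ) = a then (1 : ℤ) else 0) := by
    intro i
    by_cases hia : (i : ℕ) = a
    · simp only [hia, true_and, if_true]
      exact sum_fin_ite hb 1
    · simp [hia]
  rw [Finset.sum_congr rfl fun i _ => this i]
  exact sum_fin_ite ha 1

lemma double_count [Fintype V] (G : SimpleGraph V) [DecidableRel G.Adj] [DecidableEq V]
    (A B : Finset V) :
    ∑ a ∈ A, (B.filter (G.Adj a)).card = ∑ b ∈ B, (A.filter (G.Adj b)).card := by
  simp only [Finset.card_filter]
  rw [Finset.sum_comm]
  refine Finset.sum_congr rfl fun b _ => Finset.sum_congr rfl fun a _ => ?_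
  simp [SimpleGraph.adj_comm]

set_option linter.unreachableTactic false in
set_option linter.unusedTactic false in
lemma point00_aux (n p : ℕ) (hn : 3 ≤ n) (Di Dj : ℕ) (i j : Fin n)
    (hDi : Di = if (i : ℕ) = 0 ∨ (i : ℕ) = n - 1 then p + 1 else p + 2)
    (hDj : Dj = if (j : ℕ) = 0 ∨ (j : ℕ) = n - 1 then p + 1 else p + 2) :
    (if (i : ℕ) + 1 = (j : ℕ) ∨ (j : ℕ) + 1 = (i : ℕ)
      then ((Di : ℤ) - (Dj : ℤ)) ^ 2 else 0)
    = (if (i : ℕ) = 0 ∧ (j : ℕ) = 1 then (1 : ℤ) else 0)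
    + (if (i : ℕ) = 1 ∧ (j : ℕ) = 0 then (1 : ℤ) else 0)
    + (if (i : ℕ) = n - 2 ∧ (j : ℕ) = n - 1 then (1 : ℤ) else 0)
    + (if (i : ℕ) = n - 1 ∧ (j : ℕ) = n - 2 then (1 : ℤ) else 0) := by
  have hi := i.isLt
  have hj := j.isLt
  subst hDi hDj
  split_ifs <;> first | (exfalso; omega) | norm_num | (push_cast; ring)


set_option maxHeartbeats 1000000 in
/-- sigma index of the three-level tree where first-level pendants have
degree `2p` (hence `2p − 1` children each) and second-level pendants have degree `2p²`
(hence `2p² − 1` leaf children each). -/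
theorem sigma_three_level_tree_2p {V : Type*} [Fintype V] (G : SimpleGraph V)
    (n p : ℕ) (v : Fin n → V) (level : V → ℕ)
    (hn : 3 ≤ n) (hp : 1 ≤ p)
    (htree : G.IsTree)
    (hinj : Function.Injective v)
    (hlevel0 : ∀ w : V, level w = 0 ↔ ∃ i, w = v i)
    (hlevelle : ∀ w : V, level w ≤ 3)
    (hspine : ∀ i j : Fin n, G.Adj (v i) (v j) ↔ ((i : ℕ) + 1 = (j : ℕ) ∨ (j : ℕ) + 1 = (i : ℕ)))
    (hconsec : ∀ w x : V, G.Adj w x →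
      (level w = 0 ∧ level x = 0) ∨ level x = level w + 1 ∨ level w = level x + 1)
    (hdegEnd : deg G (v ⟨0, by omega⟩) = p + 1 ∧ deg G (v ⟨n - 1, by omega⟩) = p + 1)
    (hdegInt : ∀ i : Fin n, 0 < (i : ℕ) → (i : ℕ) < n - 1 → deg G (v i) = p + 2)
    (hchild0 : ∀ i : Fin n, nbrCount G (v i) (fun w => level w = 1) = p)
    (hdeg1 : ∀ w : V, level w = 1 → deg G w = 2 * p)
    (hchild1 : ∀ w : V, level w = 1 → nbrCount G w (fun x => level x = 2) = 2 * p - 1)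
    (hdeg2 : ∀ w : V, level w = 2 → deg G w = 2 * p ^ 2)
    (hchild2 : ∀ w : V, level w = 2 → nbrCount G w (fun x => level x = 3) = 2 * p ^ 2 - 1)
    (hdeg3 : ∀ w : V, level w = 3 → deg G w = 1) :
    sigmaIndex G =
      (n : ℤ) * (p : ℤ) * (2 * (p : ℤ) - 1) * (2 * (p : ℤ) ^ 2 - 1) ^ 3 +
      (n : ℤ) * (p : ℤ) * (2 * (p : ℤ) - 1) * (2 * (p : ℤ) - 2 * (p : ℤ) ^ 2) ^ 2 +
      2 * (p : ℤ) * (1 - (p : ℤ)) ^ 2 +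
      (p : ℤ) * ((n : ℤ) - 2) * (2 - (p : ℤ)) ^ 2 + 2 := by
  classical
  set F : V → V → ℤ := fun w x => ((deg G w : ℤ) - (deg G x : ℤ)) ^ 2 with hF
  set A : ℕ → ℕ → ℤ := fun a b => ∑ w : V, ∑ x : V,
    (if G.Adj w x ∧ level w = a ∧ level x = b then F w x else 0) with hA
  -- Step 1: decomposition
  have step1 : 2 * sigmaIndex G =
      A 0 0 + A 0 1 + A 1 0 + A 1 2 + A 2 1 + A 2 3 + A 3 2 := by
    rw [two_mul_sigma G]
    simp only [hA, ← Finset.sum_add_distrib]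
    refine Finset.sum_congr rfl fun w _ => Finset.sum_congr rfl fun x _ => ?_
    by_cases h : G.Adj w x
    · have hc := hconsec w x h
      have h1 := hlevelle w
      have h2 := hlevelle x
      simp only [h, true_and, if_true]
      have hcases : (level w = 0 ∧ level x = 0) ∨ (level w = 0 ∧ level x = 1) ∨
          (level w = 1 ∧ level x = 0) ∨ (level w = 1 ∧ level x = 2) ∨
          (level w = 2 ∧ level x = 1) ∨ (level w = 2 ∧ level x = 3) ∨
          (level w = 3 ∧ level x = 2) := by omega
      rcases hcases with ⟨ha,hb⟩|⟨ha,hb⟩|⟨ha,hb⟩|⟨ha,hb⟩|⟨ha,hb⟩|⟨ha,hb⟩|⟨ha,hb⟩ <;>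
        rw [ha, hb] <;> norm_num [hF]
    · simp [h]
  -- symmetry
  have hAsymm : ∀ a b : ℕ, A a b = A b a := by
    intro a b
    simp only [hA]
    rw [Finset.sum_comm]
    refine Finset.sum_congr rfl fun y _ => Finset.sum_congr rfl fun z _ => ?_
    have hiff : (G.Adj z y ∧ level z = a ∧ level y = b) ↔
        (G.Adj y z ∧ level y = b ∧ level z = a) := by
      constructor <;> rintro ⟨h1, h2, h3⟩ <;> exact ⟨h1.symm, h3, h2⟩
    rw [if_congr hiff rfl rfl]
    split_ifs with h
    · simp only [hF]; ring
    · rfl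
  -- split A into sum over level-a vertices of neighbor sums
  have hAsplit : ∀ a b : ℕ, A a b = ∑ w ∈ univ.filter (fun w => level w = a),
      ∑ x ∈ (G.neighborFinset w).filter (fun x => level x = b), F w x := by
    intro a b
    rw [hA, Finset.sum_filter]
    refine Finset.sum_congr rfl fun w _ => ?_
    by_cases hw : level w = a
    · simp only [hw, if_true]
      rw [Finset.sum_filter, SimpleGraph.neighborFinset_eq_filter, Finset.sum_filter]
      refine Finset.sum_congr rfl fun x _ => ?_
      by_cases hx : G.Adj w x <;> by_cases hb : level x = b <;> simp [hx, hb]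
    · rw [if_neg hw]
      refine Finset.sum_eq_zero fun x _ => ?_
      rw [if_neg]
      rintro ⟨-, h2, -⟩
      exact hw h2
  -- bridging lemmas
  have hcard_nbr : ∀ w : V, (G.neighborFinset w).card = deg G w := by
    intro w
    rw [deg_def']
    exact G.card_neighborFinset_eq_degree w
  have hchild0' : ∀ i : Fin n,
      ((G.neighborFinset (v i)).filter (fun w => level w = 1)).card = p := by
    intro i
    rw [← hchild0 i]
    unfold nbrCount
    congr!
  have hchild1' : ∀ w : V, level w = 1 →
      ((G.neighborFinset w).filter (fun x => level x = 2)).card = 2 * p - 1 := by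
    intro w hw
    rw [← hchild1 w hw]
    unfold nbrCount
    congr!
  have hchild2' : ∀ w : V, level w = 2 →
      ((G.neighborFinset w).filter (fun x => level x = 3)).card = 2 * p ^ 2 - 1 := by
    intro w hw
    rw [← hchild2 w hw]
    unfold nbrCount
    congr!
  -- each level-1 vertex has exactly one level-0 neighbor
  have hpar1 : ∀ x : V, level x = 1 →
      ((G.neighborFinset x).filter (fun y => level y = 0)).card = 1 := by
    intro x hx
    have hsplit := Finset.card_filter_add_card_filter_not
      (s := G.neighborFinset x) (p := fun y => level y = 0)
    have heq : (G.neighborFinset x).filter (fun y => ¬ level y = 0)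
        = (G.neighborFinset x).filter (fun y => level y = 2) := by
      apply Finset.filter_congr
      intro y hy
      rw [SimpleGraph.mem_neighborFinset] at hy
      have hc := hconsec x y hy
      rw [hx] at hc
      constructor <;> intro h <;> omega
    rw [heq, hchild1' x hx, hcard_nbr, hdeg1 x hx] at hsplit
    omega
  -- each level-2 vertex has exactly one level-1 neighbor
  have hpar2 : ∀ x : V, level x = 2 →
      ((G.neighborFinset x).filter (fun y => level y = 1)).card = 1 := by
    intro x hx
    have hsplit := Finset.card_filter_add_card_filter_not
      (s := G.neighborFinset x) (p := fun y => level y = 1)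
    have heq : (G.neighborFinset x).filter (fun y => ¬ level y = 1)
        = (G.neighborFinset x).filter (fun y => level y = 3) := by
      apply Finset.filter_congr
      intro y hy
      rw [SimpleGraph.mem_neighborFinset] at hy
      have hc := hconsec x y hy
      rw [hx] at hc
      constructor <;> intro h <;> omega
    rw [heq, hchild2' x hx, hcard_nbr, hdeg2 x hx] at hsplit
    have hq : 1 ≤ p ^ 2 := Nat.one_le_pow _ _ hp
    generalize hQ : p ^ 2 = Q at hsplit hq
    omega
  -- the level-0 vertices are exactly the spine
  have hB0 : univ.filter (fun w : V => level w = 0) = Finset.image v univ := by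
    ext w
    simp only [Finset.mem_filter, Finset.mem_univ, true_and, Finset.mem_image]
    rw [hlevel0 w]
    constructor
    · rintro ⟨i, rfl⟩; exact ⟨i, rfl⟩
    · rintro ⟨i, rfl⟩; exact ⟨i, rfl⟩
  have hsum0 : ∀ {M : Type} [AddCommMonoid M] (g : V → M),
      ∑ w ∈ univ.filter (fun w : V => level w = 0), g w = ∑ i : Fin n, g (v i) := by
    intro M _ g
    rw [hB0, Finset.sum_image (fun i _ j _ h => hinj h)]
  -- number of level-1 vertices
  have hcard1 : (univ.filter (fun w : V => level w = 1)).card = n * p := by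
    have hd := double_count G (univ.filter (fun w : V => level w = 0))
      (univ.filter (fun w : V => level w = 1))
    have hL : ∀ a : V, ((univ.filter (fun w : V => level w = 1)).filter (G.Adj a)).card
        = ((G.neighborFinset a).filter (fun y => level y = 1)).card := by
      intro a
      congr 1
      ext y
      simp only [Finset.mem_filter, Finset.mem_univ, true_and,
        SimpleGraph.mem_neighborFinset]
      tauto
    have hR : ∀ b : V, ((univ.filter (fun w : V => level w = 0)).filter (G.Adj b)).card
        = ((G.neighborFinset b).filter (fun y => level y = 0)).card := by
      intro b
      congr 1
      ext y
      simp only [Finset.mem_filter, Finset.mem_univ, true_and,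
        SimpleGraph.mem_neighborFinset]
      tauto
    rw [Finset.sum_congr rfl (fun a _ => hL a), Finset.sum_congr rfl (fun b _ => hR b)] at hd
    rw [hsum0] at hd
    have he1 : ∑ i : Fin n, ((G.neighborFinset (v i)).filter (fun y => level y = 1)).card
        = n * p := by
      have : ∀ i : Fin n,
          ((G.neighborFinset (v i)).filter (fun y => level y = 1)).card = p := by
        intro i
        exact hchild0' i
      rw [Finset.sum_congr rfl (fun i _ => this i), Finset.sum_const, Finset.card_univ,
        Fintype.card_fin, smul_eq_mul]
    have he2 : ∑ b ∈ univ.filter (fun w : V => level w = 1),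
        ((G.neighborFinset b).filter (fun y => level y = 0)).card
        = (univ.filter (fun w : V => level w = 1)).card := by
      rw [Finset.sum_congr rfl (fun b hb => hpar1 b (Finset.mem_filter.mp hb).2),
        Finset.sum_const, smul_eq_mul, mul_one]
    rw [he1, he2] at hd
    omega
  -- number of level-2 vertices
  have hcard2 : (univ.filter (fun w : V => level w = 2)).card = n * p * (2 * p - 1) := by
    have hd := double_count G (univ.filter (fun w : V => level w = 1))
      (univ.filter (fun w : V => level w = 2))
    have hL : ∀ a : V, ((univ.filter (fun w : V => level w = 2)).filter (G.Adj a)).card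
        = ((G.neighborFinset a).filter (fun y => level y = 2)).card := by
      intro a
      congr 1
      ext y
      simp only [Finset.mem_filter, Finset.mem_univ, true_and,
        SimpleGraph.mem_neighborFinset]
      tauto
    have hR : ∀ b : V, ((univ.filter (fun w : V => level w = 1)).filter (G.Adj b)).card
        = ((G.neighborFinset b).filter (fun y => level y = 1)).card := by
      intro b
      congr 1
      ext y
      simp only [Finset.mem_filter, Finset.mem_univ, true_and,
        SimpleGraph.mem_neighborFinset]
      tauto
    rw [Finset.sum_congr rfl (fun a _ => hL a), Finset.sum_congr rfl (fun b _ => hR b)] at hd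
    have he1 : ∑ a ∈ univ.filter (fun w : V => level w = 1),
        ((G.neighborFinset a).filter (fun y => level y = 2)).card = n * p * (2 * p - 1) := by
      have : ∀ a ∈ univ.filter (fun w : V => level w = 1),
          ((G.neighborFinset a).filter (fun y => level y = 2)).card = 2 * p - 1 := by
        intro a ha
        exact hchild1' a (Finset.mem_filter.mp ha).2
      rw [Finset.sum_congr rfl this, Finset.sum_const, hcard1, smul_eq_mul]
    have he2 : ∑ b ∈ univ.filter (fun w : V => level w = 2),
        ((G.neighborFinset b).filter (fun y => level y = 1)).card
        = (univ.filter (fun w : V => level w = 2)).card := by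
      rw [Finset.sum_congr rfl (fun b hb => hpar2 b (Finset.mem_filter.mp hb).2),
        Finset.sum_const, smul_eq_mul, mul_one]
    rw [he1, he2] at hd
    omega
  -- degree of spine vertices
  have hD : ∀ k : Fin n, deg G (v k) = if (k : ℕ) = 0 ∨ (k : ℕ) = n - 1 then p + 1 else p + 2 := by
    intro k
    by_cases hk : (k : ℕ) = 0 ∨ (k : ℕ) = n - 1
    · rw [if_pos hk]
      rcases hk with hk | hk
      · have hke : k = ⟨0, by omega⟩ := Fin.ext hk
        rw [hke]; exact hdegEnd.1
      · have hke : k = ⟨n - 1, by omega⟩ := Fin.ext hk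
        rw [hke]; exact hdegEnd.2
    · rw [if_neg hk]
      have hlt := k.isLt
      exact hdegInt k (by omega) (by omega)
  -- A 2 3
  have hA23 : A 2 3 = ((n * p * (2 * p - 1) : ℕ) : ℤ) * ((2 * p ^ 2 - 1 : ℕ) : ℤ) *
      (2 * (p : ℤ) ^ 2 - 1) ^ 2 := by
    rw [hAsplit]
    have hin : ∀ w ∈ univ.filter (fun w : V => level w = 2),
        ∑ x ∈ (G.neighborFinset w).filter (fun x => level x = 3), F w x
        = ((2 * p ^ 2 - 1 : ℕ) : ℤ) * (2 * (p : ℤ) ^ 2 - 1) ^ 2 := by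
      intro w hw
      have hw2 := (Finset.mem_filter.mp hw).2
      have hconst : ∀ x ∈ (G.neighborFinset w).filter (fun x => level x = 3),
          F w x = (2 * (p : ℤ) ^ 2 - 1) ^ 2 := by
        intro x hx
        have hx3 := (Finset.mem_filter.mp hx).2
        simp only [hF]
        rw [hdeg2 w hw2, hdeg3 x hx3]
        push_cast
        ring
      rw [Finset.sum_congr rfl hconst, Finset.sum_const, hchild2' w hw2, nsmul_eq_mul]
    rw [Finset.sum_congr rfl hin, Finset.sum_const, hcard2, nsmul_eq_mul]
    ring
  -- A 1 2
  have hA12 : A 1 2 = ((n * p : ℕ) : ℤ) * ((2 * p - 1 : ℕ) : ℤ) *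
      (2 * (p : ℤ) - 2 * (p : ℤ) ^ 2) ^ 2 := by
    rw [hAsplit]
    have hin : ∀ w ∈ univ.filter (fun w : V => level w = 1),
        ∑ x ∈ (G.neighborFinset w).filter (fun x => level x = 2), F w x
        = ((2 * p - 1 : ℕ) : ℤ) * (2 * (p : ℤ) - 2 * (p : ℤ) ^ 2) ^ 2 := by
      intro w hw
      have hw1 := (Finset.mem_filter.mp hw).2
      have hconst : ∀ x ∈ (G.neighborFinset w).filter (fun x => level x = 2),
          F w x = (2 * (p : ℤ) - 2 * (p : ℤ) ^ 2) ^ 2 := by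
        intro x hx
        have hx2 := (Finset.mem_filter.mp hx).2
        simp only [hF]
        rw [hdeg1 w hw1, hdeg2 x hx2]
        push_cast
        ring
      rw [Finset.sum_congr rfl hconst, Finset.sum_const, hchild1' w hw1, nsmul_eq_mul]
    rw [Finset.sum_congr rfl hin, Finset.sum_const, hcard1, nsmul_eq_mul]
    ring
  -- A 0 1
  have hA01 : A 0 1 = 2 * (p : ℤ) * (1 - (p : ℤ)) ^ 2
      + ((n : ℤ) - 2) * ((p : ℤ) * (2 - (p : ℤ)) ^ 2) := by
    rw [hAsplit, hsum0]
    have hin : ∀ i : Fin n,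
        ∑ x ∈ (G.neighborFinset (v i)).filter (fun x => level x = 1), F (v i) x
        = (p : ℤ) * ((deg G (v i) : ℤ) - 2 * (p : ℤ)) ^ 2 := by
      intro i
      have hconst : ∀ x ∈ (G.neighborFinset (v i)).filter (fun x => level x = 1),
          F (v i) x = ((deg G (v i) : ℤ) - 2 * (p : ℤ)) ^ 2 := by
        intro x hx
        have hx1 := (Finset.mem_filter.mp hx).2
        simp only [hF]
        rw [hdeg1 x hx1]
        push_cast
        ring
      rw [Finset.sum_congr rfl hconst, Finset.sum_const, hchild0' i, nsmul_eq_mul]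
    rw [Finset.sum_congr rfl (fun i _ => hin i)]
    have point : ∀ i : Fin n, (p : ℤ) * ((deg G (v i) : ℤ) - 2 * (p : ℤ)) ^ 2
        = (if (i : ℕ) = 0 then (p : ℤ) * (1 - (p : ℤ)) ^ 2 - (p : ℤ) * (2 - (p : ℤ)) ^ 2 else 0)
        + (if (i : ℕ) = n - 1 then (p : ℤ) * (1 - (p : ℤ)) ^ 2 - (p : ℤ) * (2 - (p : ℤ)) ^ 2 else 0)
        + (p : ℤ) * (2 - (p : ℤ)) ^ 2 := by
      intro i
      rw [hD i]
      by_cases h0 : (i : ℕ) = 0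
      · have hne : ¬ (i : ℕ) = n - 1 := by omega
        rw [if_pos (Or.inl h0), if_pos h0, if_neg hne]
        push_cast
        ring
      · by_cases h1 : (i : ℕ) = n - 1
        · rw [if_pos (Or.inr h1), if_neg h0, if_pos h1]
          push_cast
          ring
        · rw [if_neg (by tauto), if_neg h0, if_neg h1]
          push_cast
          ring
    rw [Finset.sum_congr rfl (fun i _ => point i), Finset.sum_add_distrib,
      Finset.sum_add_distrib, sum_fin_ite (show 0 < n by omega),
      sum_fin_ite (show n - 1 < n by omega), Finset.sum_const, Finset.card_univ,
      Fintype.card_fin, nsmul_eq_mul]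
    push_cast
    ring
  -- A 0 0
  have hA00 : A 0 0 = 4 := by
    rw [hAsplit, hsum0]
    have hset : ∀ i : Fin n, (G.neighborFinset (v i)).filter (fun x => level x = 0)
        = Finset.image v (univ.filter
            (fun j : Fin n => (i : ℕ) + 1 = (j : ℕ) ∨ (j : ℕ) + 1 = (i : ℕ))) := by
      intro i
      ext x
      simp only [Finset.mem_filter, SimpleGraph.mem_neighborFinset, Finset.mem_image,
        Finset.mem_univ, true_and]
      constructor
      · rintro ⟨hadj, hx0⟩
        obtain ⟨j, rfl⟩ := (hlevel0 x).1 hx0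
        exact ⟨j, (hspine i j).1 hadj, rfl⟩
      · rintro ⟨j, hcons, rfl⟩
        exact ⟨(hspine i j).2 hcons, (hlevel0 _).2 ⟨j, rfl⟩⟩
    have hrw : ∀ i : Fin n,
        ∑ x ∈ (G.neighborFinset (v i)).filter (fun x => level x = 0), F (v i) x
        = ∑ j : Fin n, (if (i : ℕ) + 1 = (j : ℕ) ∨ (j : ℕ) + 1 = (i : ℕ)
            then F (v i) (v j) else 0) := by
      intro i
      rw [hset i, Finset.sum_image (fun a _ b _ h => hinj h), Finset.sum_filter]
    rw [Finset.sum_congr rfl (fun i _ => hrw i)]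
    have point : ∀ i j : Fin n,
        (if (i : ℕ) + 1 = (j : ℕ) ∨ (j : ℕ) + 1 = (i : ℕ) then F (v i) (v j) else 0)
        = (if (i : ℕ) = 0 ∧ (j : ℕ) = 1 then (1 : ℤ) else 0)
        + (if (i : ℕ) = 1 ∧ (j : ℕ) = 0 then (1 : ℤ) else 0)
        + (if (i : ℕ) = n - 2 ∧ (j : ℕ) = n - 1 then (1 : ℤ) else 0)
        + (if (i : ℕ) = n - 1 ∧ (j : ℕ) = n - 2 then (1 : ℤ) else 0) := by
      intro i j
      simp only [hF]
      exact point00_aux n p hn _ _ i j (hD i) (hD j)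
    rw [Finset.sum_congr rfl (fun i _ => Finset.sum_congr rfl (fun j _ => point i j))]
    simp only [Finset.sum_add_distrib]
    rw [sum_fin_ite2 (show 0 < n by omega) (show 1 < n by omega),
      sum_fin_ite2 (show 1 < n by omega) (show 0 < n by omega),
      sum_fin_ite2 (show n - 2 < n by omega) (show n - 1 < n by omega),
      sum_fin_ite2 (show n - 1 < n by omega) (show n - 2 < n by omega)]
    norm_num
  -- assemble
  rw [hAsymm 1 0, hAsymm 2 1, hAsymm 3 2] at step1
  rw [hA00, hA01, hA12, hA23] at step1
  have h2p : 1 ≤ 2 * p := by omega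
  have hq : 1 ≤ p ^ 2 := Nat.one_le_pow _ _ hp
  have h2q : 1 ≤ 2 * p ^ 2 := by linarith
  have hfinal : 2 * sigmaIndex G = 2 *
      ((n : ℤ) * (p : ℤ) * (2 * (p : ℤ) - 1) * (2 * (p : ℤ) ^ 2 - 1) ^ 3 +
      (n : ℤ) * (p : ℤ) * (2 * (p : ℤ) - 1) * (2 * (p : ℤ) - 2 * (p : ℤ) ^ 2) ^ 2 +
      2 * (p : ℤ) * (1 - (p : ℤ)) ^ 2 +
      (p : ℤ) * ((n : ℤ) - 2) * (2 - (p : ℤ)) ^ 2 + 2) := by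
    rw [step1]
    push_cast [Nat.cast_sub h2p, Nat.cast_sub h2q]
    ring
  linarith [hfinal]
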